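/- Let α be a countable type and r a confluent binary relation on α such that any two elements are r-convertible (for all a, b: a ↔*_r b). Then r has a spanning tree: there exists a relation s on α such that (1) s is a subrelation of r, (2) s is deterministic (s a b and s a c imply b = c), (3) s is acyclic (the transitive closure of s is irreflexive), and (4) any two elements have a common s-reduct: for all a, b there exists c with s* a c and s* b c. -/

import Mathlib

/-- Conversion: reflexive–transitive closure of the symmetric closure. -/
def Conv {α : Type*} (r : α → α → Prop) : α → α → Prop :=
  Relation.ReflTransGen (fun a b => r a b ∨ r b a)

namespace Stmt8Aux

open Relation Classical

variable {α : Type*}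

/-- `n`-step reachability. -/
def stepN (r : α → α → Prop) : ℕ → α → α → Prop
  | 0 => fun a b => a = b
  | n + 1 => fun a b => ∃ x, r a x ∧ stepN r n x b

theorem stepN_rtg {r : α → α → Prop} : ∀ {n : ℕ} {a b : α},
    stepN r n a b → Relation.ReflTransGen r a b := by
  intro n
  induction n with
  | zero => intro a b h; exact h ▸ ReflTransGen.refl
  | succ n ih => rintro a b ⟨x, hx, h⟩; exact ReflTransGen.head hx (ih h)

theorem rtg_stepN {r : α → α → Prop} {a b : α} (h : Relation.ReflTransGen r a b) :
    ∃ n, stepN r n a b := by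
  induction h using ReflTransGen.head_induction_on with
  | refl => exact ⟨0, rfl⟩
  | head hab _ ih => obtain ⟨n, hn⟩ := ih; exact ⟨n + 1, _, hab, hn⟩

theorem church_rosser {r : α → α → Prop}
    (hconf : ∀ a b c, Relation.ReflTransGen r a b → Relation.ReflTransGen r a c →
      ∃ d, Relation.ReflTransGen r b d ∧ Relation.ReflTransGen r c d)
    (hconn : ∀ a b, Conv r a b) (a b : α) :
    ∃ d, Relation.ReflTransGen r a d ∧ Relation.ReflTransGen r b d := by
  have h := hconn a b
  induction h with
  | refl => exact ⟨a, ReflTransGen.refl, ReflTransGen.refl⟩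
  | @tail b' c h1 h2 ih =>
    obtain ⟨d, had, hbd⟩ := ih
    rcases h2 with h2 | h2
    · obtain ⟨d', hdd', hcd'⟩ := hconf b' d c hbd (ReflTransGen.single h2)
      exact ⟨d', had.trans hdd', hcd'⟩
    · exact ⟨d, had, (ReflTransGen.single h2).trans hbd⟩

/-! ### Case A : a global sink exists -/

theorem caseA (r : α → α → Prop) (z : α) (hz : ∀ a, Relation.ReflTransGen r a z) :
    ∃ s : α → α → Prop,
      (∀ a b, s a b → r a b) ∧
      (∀ a b c, s a b → s a c → b = c) ∧
      (∀ a, ¬ Relation.TransGen s a a) ∧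
      (∀ a b, ∃ c, Relation.ReflTransGen s a c ∧ Relation.ReflTransGen s b c) := by
  classical
  have hex : ∀ a, ∃ k, stepN r k a z := fun a => rtg_stepN (hz a)
  have hdpos : ∀ a, a ≠ z → 0 < Nat.find (hex a) := by
    intro a ha
    rcases Nat.eq_zero_or_pos (Nat.find (hex a)) with h0 | h1
    · exfalso
      have hs := Nat.find_spec (hex a)
      rw [h0] at hs
      exact ha hs
    · exact h1
  have hstep : ∀ a, a ≠ z → ∃ b, r a b ∧ stepN r (Nat.find (hex a) - 1) b z := by
    intro a ha
    have hs := Nat.find_spec (hex a)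
    rw [show Nat.find (hex a) = (Nat.find (hex a) - 1) + 1 from
      (Nat.succ_pred_eq_of_pos (hdpos a ha)).symm] at hs
    exact hs
  choose g hg1 hg2 using hstep
  refine ⟨fun a b => ∃ h : a ≠ z, b = g a h, ?_, ?_, ?_, ?_⟩
  · rintro a b ⟨h, rfl⟩; exact hg1 a h
  · rintro a b c ⟨h, rfl⟩ ⟨h', rfl⟩; rfl
  · have hdec : ∀ a b, (∃ h : a ≠ z, b = g a h) → Nat.find (hex b) < Nat.find (hex a) := by
      rintro a b ⟨h, rfl⟩
      have h1 : Nat.find (hex (g a h)) ≤ Nat.find (hex a) - 1 := Nat.find_min' _ (hg2 a h)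
      have h2 := hdpos a h
      omega
    intro a ha
    have key : ∀ x y, Relation.TransGen (fun a b => ∃ h : a ≠ z, b = g a h) x y →
        Nat.find (hex y) < Nat.find (hex x) := by
      intro x y h
      induction h with
      | single h => exact hdec _ _ h
      | tail _ h ih => exact lt_trans (hdec _ _ h) ih
    exact lt_irrefl _ (key a a ha)
  · have hreach : ∀ a, Relation.ReflTransGen (fun a b => ∃ h : a ≠ z, b = g a h) a z := by
      intro a
      generalize hn : Nat.find (hex a) = n
      induction n using Nat.strong_induction_on generalizing a with
      | _ n ih =>
        by_cases ha : a = z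
        · rw [ha]
        · have h1 : Nat.find (hex (g a ha)) ≤ Nat.find (hex a) - 1 := Nat.find_min' _ (hg2 a ha)
          have h2 := hdpos a ha
          exact ReflTransGen.head ⟨ha, rfl⟩ (ih (Nat.find (hex (g a ha))) (by omega) _ rfl)
    exact fun a b => ⟨z, hreach a, hreach b⟩

/-! ### Case B : no global sink; use a cofinal chain -/

/-- Data for the no-sink case: a surjective enumeration, a cofinal chain, and the fact
that every element has a chain element strictly above it. -/
structure Setup (α : Type*) where
  r : α → α → Prop
  c : ℕ → α
  e : ℕ → α
  he : Function.Surjective e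
  hc : ∀ n m, n ≤ m → Relation.ReflTransGen r (c n) (c m)
  hM : ∀ x : α, ∃ n, Relation.ReflTransGen r x (c n) ∧ ¬ Relation.ReflTransGen r (c n) x

namespace Setup

variable {α : Type*} (S : Setup α)

def RT : α → α → Prop := Relation.ReflTransGen S.r

/-- mutual reachability (equivalence). -/
def EQ (x y : α) : Prop := S.RT x y ∧ S.RT y x

theorem EQ_refl (x : α) : S.EQ x x := ⟨ReflTransGen.refl, ReflTransGen.refl⟩

theorem EQ_symm {x y : α} (h : S.EQ x y) : S.EQ y x := ⟨h.2, h.1⟩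

theorem EQ_trans {x y z : α} (h : S.EQ x y) (h' : S.EQ y z) : S.EQ x z :=
  ⟨h.1.trans h'.1, h'.2.trans h.2⟩

open Classical in
/-- index of the least chain element strictly above `x`. -/
noncomputable def M (x : α) : ℕ := Nat.find (S.hM x)

theorem M_spec (x : α) : S.RT x (S.c (S.M x)) ∧ ¬ S.RT (S.c (S.M x)) x :=
  Nat.find_spec (S.hM x)

theorem M_min {x : α} {n : ℕ} (h1 : S.RT x (S.c n)) (h2 : ¬ S.RT (S.c n) x) : S.M x ≤ n :=
  Nat.find_min' _ ⟨h1, h2⟩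

theorem M_lt {x : α} {n : ℕ} (h : n < S.M x) :
    ¬ (S.RT x (S.c n) ∧ ¬ S.RT (S.c n) x) := Nat.find_min (S.hM x) h

theorem M_congr {x y : α} (h : S.EQ x y) : S.M x = S.M y := by
  apply le_antisymm
  · exact S.M_min (h.1.trans (S.M_spec y).1) (fun hh => (S.M_spec y).2 (hh.trans h.1))
  · exact S.M_min (h.2.trans (S.M_spec x).1) (fun hh => (S.M_spec x).2 (hh.trans h.2))

theorem hL (x : α) : ∃ k, ∃ y, S.EQ x y ∧ stepN S.r k y (S.c (S.M x)) := by
  obtain ⟨k, hk⟩ := rtg_stepN (S.M_spec x).1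
  exact ⟨k, x, S.EQ_refl x, hk⟩

open Classical in
/-- minimal length of a path from the class of `x` to `c (M x)`. -/
noncomputable def L (x : α) : ℕ := Nat.find (S.hL x)

theorem L_min {x : α} {k : ℕ} (h : ∃ y, S.EQ x y ∧ stepN S.r k y (S.c (S.M x))) :
    S.L x ≤ k := Nat.find_min' _ h

/-- the chosen start (exit vertex) of a minimal path from the class of `x`. -/
noncomputable def V0 (x : α) : α := Classical.choose (Nat.find_spec (S.hL x))

theorem V0_spec (x : α) : S.EQ x (S.V0 x) ∧ stepN S.r (S.L x) (S.V0 x) (S.c (S.M x)) :=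
  Classical.choose_spec (Nat.find_spec (S.hL x))

theorem L_pos (x : α) : 0 < S.L x := by
  rcases Nat.eq_zero_or_pos (S.L x) with h0 | h1
  · exfalso
    have hs := (S.V0_spec x).2
    rw [h0] at hs
    have : S.V0 x = S.c (S.M x) := hs
    have hEQ : S.EQ x (S.c (S.M x)) := this ▸ (S.V0_spec x).1
    exact (S.M_spec x).2 hEQ.2
  · exact h1

theorem hU0 (x : α) : ∃ u, S.r (S.V0 x) u ∧ stepN S.r (S.L x - 1) u (S.c (S.M x)) := by
  have h := (S.V0_spec x).2
  rw [show S.L x = (S.L x - 1) + 1 from (Nat.succ_pred_eq_of_pos (S.L_pos x)).symm] at h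
  exact h

/-- the second vertex of the minimal exit path (leaves the class of `x`). -/
noncomputable def U0 (x : α) : α := Classical.choose (S.hU0 x)

theorem U0_spec (x : α) : S.r (S.V0 x) (S.U0 x) ∧ stepN S.r (S.L x - 1) (S.U0 x) (S.c (S.M x)) :=
  Classical.choose_spec (S.hU0 x)

theorem U0_not_eq (x : α) : ¬ S.EQ x (S.U0 x) := by
  intro h
  have h1 : S.L x ≤ S.L x - 1 := S.L_min ⟨S.U0 x, h, (S.U0_spec x).2⟩
  have h2 := S.L_pos x
  omega

theorem hrep (x : α) : ∃ i, S.EQ x (S.e i) := by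
  obtain ⟨i, hi⟩ := S.he x
  exact ⟨i, hi ▸ S.EQ_refl x⟩

open Classical in
/-- canonical representative of the class of `x`. -/
noncomputable def rp (x : α) : α := S.e (Nat.find (S.hrep x))

theorem rp_eq (x : α) : S.EQ x (S.rp x) := Nat.find_spec (S.hrep x)

theorem rp_congr {x y : α} (h : S.EQ x y) : S.rp x = S.rp y := by
  unfold rp
  congr 1
  apply le_antisymm
  · exact Nat.find_min' _ (S.EQ_trans h (S.rp_eq y))
  · exact Nat.find_min' _ (S.EQ_trans (S.EQ_symm h) (S.rp_eq x))

theorem L_congr {x y : α} (h : S.EQ x y) : S.L x = S.L y := by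
  apply le_antisymm
  · apply S.L_min
    refine ⟨S.V0 y, S.EQ_trans h (S.V0_spec y).1, ?_⟩
    rw [S.M_congr h]
    exact (S.V0_spec y).2
  · apply S.L_min
    refine ⟨S.V0 x, S.EQ_trans (S.EQ_symm h) (S.V0_spec x).1, ?_⟩
    rw [← S.M_congr h]
    exact (S.V0_spec x).2

/-- class-invariant exit vertex. -/
noncomputable def V (x : α) : α := S.V0 (S.rp x)

/-- class-invariant first vertex after the exit. -/
noncomputable def U (x : α) : α := S.U0 (S.rp x)

theorem V_congr {x y : α} (h : S.EQ x y) : S.V x = S.V y := by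
  unfold V; rw [S.rp_congr h]

theorem U_congr {x y : α} (h : S.EQ x y) : S.U x = S.U y := by
  unfold U; rw [S.rp_congr h]

theorem EQ_V (x : α) : S.EQ x (S.V x) := S.EQ_trans (S.rp_eq x) (S.V0_spec (S.rp x)).1

theorem rVU (x : α) : S.r (S.V x) (S.U x) := (S.U0_spec (S.rp x)).1

theorem not_EQ_U (x : α) : ¬ S.EQ x (S.U x) := by
  intro h
  exact S.U0_not_eq (S.rp x) (S.EQ_trans (S.EQ_symm (S.rp_eq x)) h)

theorem U_step (x : α) : stepN S.r (S.L x - 1) (S.U x) (S.c (S.M x)) := by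
  have h := (S.U0_spec (S.rp x)).2
  rw [← S.M_congr (S.rp_eq x), ← S.L_congr (S.rp_eq x)] at h
  exact h

theorem hdel (x : α) : ∃ k, stepN S.r k x (S.V x) := rtg_stepN (S.EQ_V x).1

open Classical in
/-- distance from `x` to its class exit vertex. -/
noncomputable def del (x : α) : ℕ := Nat.find (S.hdel x)

theorem del_spec (x : α) : stepN S.r (S.del x) x (S.V x) := Nat.find_spec (S.hdel x)

theorem del_min {x : α} {k : ℕ} (h : stepN S.r k x (S.V x)) : S.del x ≤ k :=
  Nat.find_min' _ h

theorem del_pos {x : α} (hx : x ≠ S.V x) : 0 < S.del x := by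
  rcases Nat.eq_zero_or_pos (S.del x) with h0 | h1
  · exfalso; have h := S.del_spec x; rw [h0] at h; exact hx h
  · exact h1

theorem hf {x : α} (hx : ¬ x = S.V x) : ∃ b, S.r x b ∧ stepN S.r (S.del x - 1) b (S.V x) := by
  have h := S.del_spec x
  rw [show S.del x = (S.del x - 1) + 1 from (Nat.succ_pred_eq_of_pos (S.del_pos hx)).symm] at h
  exact h

open Classical in
/-- the successor function: inside the class, step along a shortest path to the exit
vertex; at the exit vertex, leave the class. -/
noncomputable def f (x : α) : α :=
  if hx : x = S.V x then S.U x else Classical.choose (S.hf hx)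

/-- the spanning relation. -/
def s (a b : α) : Prop := b = S.f a

theorem f_sub (x : α) : S.r x (S.f x) := by
  unfold f
  split_ifs with hx
  · have h := S.rVU x; rwa [← hx] at h
  · exact (Classical.choose_spec (S.hf hx)).1

theorem step_within {x : α} (hx : ¬ x = S.V x) :
    S.EQ x (S.f x) ∧ S.del (S.f x) < S.del x := by
  have hfx : S.f x = Classical.choose (S.hf hx) := dif_neg hx
  have hb := Classical.choose_spec (S.hf hx)
  rw [← hfx] at hb
  have hEQ : S.EQ x (S.f x) :=
    ⟨ReflTransGen.single hb.1, (stepN_rtg hb.2).trans (S.EQ_V x).2⟩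
  refine ⟨hEQ, ?_⟩
  have hV : S.V (S.f x) = S.V x := (S.V_congr hEQ).symm
  have h1 : S.del (S.f x) ≤ S.del x - 1 := S.del_min (hV ▸ hb.2)
  have h2 := S.del_pos hx
  omega

theorem f_V (x : α) : S.f (S.V x) = S.U x := by
  have h1 : S.V (S.V x) = S.V x := (S.V_congr (S.EQ_V x)).symm
  unfold f
  rw [dif_pos h1.symm]
  exact (S.U_congr (S.EQ_V x)).symm

/-- everyone reaches the exit vertex of its class via `s`. -/
theorem W (x : α) : Relation.ReflTransGen S.s x (S.V x) := by
  generalize hn : S.del x = n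
  induction n using Nat.strong_induction_on generalizing x with
  | _ n ih =>
    by_cases hx : x = S.V x
    · rw [← hx]
    · have h := S.step_within hx
      have hV : S.V (S.f x) = S.V x := (S.V_congr h.1).symm
      exact ReflTransGen.head rfl (hV ▸ ih (S.del (S.f x)) (hn ▸ h.2) (S.f x) rfl)

theorem s_rtg {x y : α} (h : Relation.ReflTransGen S.s x y) : S.RT x y := by
  induction h with
  | refl => exact ReflTransGen.refl
  | tail _ hs ih =>
    exact ih.trans (ReflTransGen.single (by rw [hs]; exact S.f_sub _))

theorem t_rtg {x y : α} (h : Relation.TransGen S.s x y) : S.RT x y :=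
  S.s_rtg h.to_reflTransGen

theorem acyclic_aux {x y : α} (h : Relation.TransGen S.s x y) : S.RT y x → S.del y < S.del x := by
  induction h using TransGen.head_induction_on with
  | single hs =>
    intro hyx
    rename_i a
    -- hs : S.s a y, i.e. y = S.f a
    have hray : S.r a y := by rw [hs]; exact S.f_sub a
    have hx : ¬ a = S.V a := by
      intro hV
      apply S.not_EQ_U a
      have hyU : y = S.U a := by rw [hs, hV, S.f_V, ← S.U_congr (S.EQ_V a)]
      exact hyU ▸ ⟨ReflTransGen.single hray, hyx⟩
    have h := S.step_within hx
    rw [← hs] at h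
    exact h.2
  | head hs h2 ih =>
    intro hyx
    rename_i a b
    -- hs : S.s a b, h2 : TransGen S.s b y
    have hrab : S.r a b := by rw [hs]; exact S.f_sub a
    have hba : S.RT b a := (S.t_rtg h2).trans hyx
    have hx : ¬ a = S.V a := by
      intro hV
      apply S.not_EQ_U a
      have hbU : b = S.U a := by rw [hs, hV, S.f_V, ← S.U_congr (S.EQ_V a)]
      exact hbU ▸ ⟨ReflTransGen.single hrab, hba⟩
    have hst := S.step_within hx
    rw [← hs] at hst
    have h1 : S.del y < S.del b := ih (hyx.trans (ReflTransGen.single hrab))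
    exact lt_trans h1 hst.2

theorem acyclic (a : α) : ¬ Relation.TransGen S.s a a :=
  fun h => lt_irrefl _ (S.acyclic_aux h ReflTransGen.refl)

theorem chainhit (x : α) : ∃ y, Relation.ReflTransGen S.s x y ∧ S.EQ y (S.c (S.M x)) := by
  generalize hn : S.L x = n
  induction n using Nat.strong_induction_on generalizing x with
  | _ n ih =>
    have hVU : S.s (S.V x) (S.U x) := (S.f_V x).symm
    have hxu : Relation.ReflTransGen S.s x (S.U x) := (S.W x).tail hVU
    have hustep : stepN S.r (S.L x - 1) (S.U x) (S.c (S.M x)) := S.U_step x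
    by_cases hcase : S.EQ (S.U x) (S.c (S.M x))
    · exact ⟨S.U x, hxu, hcase⟩
    · have hru : S.RT (S.U x) (S.c (S.M x)) := stepN_rtg hustep
      have hnr : ¬ S.RT (S.c (S.M x)) (S.U x) := fun h => hcase ⟨hru, h⟩
      have hMle : S.M (S.U x) ≤ S.M x := S.M_min hru hnr
      have hRTxu : S.RT x (S.U x) := S.s_rtg hxu
      have hMge : S.M x ≤ S.M (S.U x) := by
        apply S.M_min (hRTxu.trans (S.M_spec (S.U x)).1)
        intro hh
        exact (S.M_spec (S.U x)).2 (hh.trans hRTxu)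
      have hMu : S.M (S.U x) = S.M x := le_antisymm hMle hMge
      have hLu : S.L (S.U x) ≤ S.L x - 1 := by
        apply S.L_min
        refine ⟨S.U x, S.EQ_refl _, ?_⟩
        rw [hMu]
        exact hustep
      have hLpos := S.L_pos x
      obtain ⟨y, hy1, hy2⟩ := ih (S.L (S.U x)) (by omega) (S.U x) rfl
      rw [hMu] at hy2
      exact ⟨y, hxu.trans hy1, hy2⟩

theorem key : ∀ N : ℕ, ∀ x : α, S.M x ≤ N →
    ∃ y, Relation.ReflTransGen S.s x y ∧ S.EQ y (S.c N) := by
  intro N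
  induction N with
  | zero =>
    intro x hx
    obtain ⟨y, h1, h2⟩ := S.chainhit x
    rw [Nat.le_zero.mp hx] at h2
    exact ⟨y, h1, h2⟩
  | succ N ihN =>
    intro x hx
    rcases eq_or_lt_of_le hx with heq | hlt
    · obtain ⟨y, h1, h2⟩ := S.chainhit x
      rw [heq] at h2
      exact ⟨y, h1, h2⟩
    · have hxN : S.M x ≤ N := by omega
      obtain ⟨y, h1, h2⟩ := ihN x hxN
      have hMy_ge : N + 1 ≤ S.M y := by
        by_contra hcon
        push_neg at hcon
        exact (S.M_spec y).2 ((S.hc _ _ (by omega)).trans h2.2)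
      rcases eq_or_lt_of_le hMy_ge with heq2 | hlt2
      · obtain ⟨z, g1, g2⟩ := S.chainhit y
        rw [← heq2] at g2
        exact ⟨z, h1.trans g1, g2⟩
      · have hRT : S.RT y (S.c (N + 1)) := h2.1.trans (S.hc N (N + 1) (by omega))
        have hmin := S.M_lt hlt2
        have hback : S.RT (S.c (N + 1)) y := by
          by_contra hb
          exact hmin ⟨hRT, hb⟩
        exact ⟨y, h1, hRT, hback⟩

theorem merge (a b : α) :
    ∃ d, Relation.ReflTransGen S.s a d ∧ Relation.ReflTransGen S.s b d := by
  obtain ⟨ya, ha1, ha2⟩ := S.key (max (S.M a) (S.M b)) a (le_max_left _ _)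
  obtain ⟨yb, hb1, hb2⟩ := S.key (max (S.M a) (S.M b)) b (le_max_right _ _)
  have hEQ : S.EQ ya yb := S.EQ_trans ha2 (S.EQ_symm hb2)
  have hV : S.V ya = S.V yb := S.V_congr hEQ
  exact ⟨S.V ya, ha1.trans (S.W ya), hb1.trans (by rw [hV]; exact S.W yb)⟩

end Setup

/-- the cofinal chain. -/
noncomputable def chain (r : α → α → Prop) (e : ℕ → α)
    (cr : ∀ a b : α, ∃ d, Relation.ReflTransGen r a d ∧ Relation.ReflTransGen r b d) :
    ℕ → α
  | 0 => e 0
  | n + 1 => Classical.choose (cr (chain r e cr n) (e (n + 1)))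

theorem chain_step (r : α → α → Prop) (e : ℕ → α)
    (cr : ∀ a b : α, ∃ d, Relation.ReflTransGen r a d ∧ Relation.ReflTransGen r b d)
    (n : ℕ) : Relation.ReflTransGen r (chain r e cr n) (chain r e cr (n + 1)) :=
  (Classical.choose_spec (cr (chain r e cr n) (e (n + 1)))).1

theorem chain_mono (r : α → α → Prop) (e : ℕ → α)
    (cr : ∀ a b : α, ∃ d, Relation.ReflTransGen r a d ∧ Relation.ReflTransGen r b d)
    {n m : ℕ} (h : n ≤ m) : Relation.ReflTransGen r (chain r e cr n) (chain r e cr m) := by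
  induction m, h using Nat.le_induction with
  | base => exact ReflTransGen.refl
  | succ m _ ih => exact ih.trans (chain_step r e cr m)

theorem chain_e (r : α → α → Prop) (e : ℕ → α)
    (cr : ∀ a b : α, ∃ d, Relation.ReflTransGen r a d ∧ Relation.ReflTransGen r b d) :
    ∀ k, Relation.ReflTransGen r (e k) (chain r e cr k)
  | 0 => ReflTransGen.refl
  | k + 1 => (Classical.choose_spec (cr (chain r e cr k) (e (k + 1)))).2

end Stmt8Aux

/-- A countable confluent relation whose elements are all convertible has a
spanning tree. -/
theorem stmt_8 {α : Type*} [Countable α] (r : α → α → Prop)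
    (hconf : ∀ a b c, Relation.ReflTransGen r a b → Relation.ReflTransGen r a c →
      ∃ d, Relation.ReflTransGen r b d ∧ Relation.ReflTransGen r c d)
    (hconn : ∀ a b, Conv r a b) :
    ∃ s : α → α → Prop,
      (∀ a b, s a b → r a b) ∧
      (∀ a b c, s a b → s a c → b = c) ∧
      (∀ a, ¬ Relation.TransGen s a a) ∧
      (∀ a b, ∃ c, Relation.ReflTransGen s a c ∧ Relation.ReflTransGen s b c) := by
  classical
  by_cases hne : Nonempty α
  · obtain ⟨e, he⟩ := exists_surjective_nat α
    have cr := Stmt8Aux.church_rosser hconf hconn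
    by_cases hz : ∃ z, ∀ a, Relation.ReflTransGen r a z
    · obtain ⟨z, hz⟩ := hz
      exact Stmt8Aux.caseA r z hz
    · push_neg at hz
      set c := Stmt8Aux.chain r e cr with hcdef
      have hc : ∀ n m, n ≤ m → Relation.ReflTransGen r (c n) (c m) :=
        fun n m h => Stmt8Aux.chain_mono r e cr h
      have hcof : ∀ a, ∃ n, Relation.ReflTransGen r a (c n) := by
        intro a
        obtain ⟨k, hk⟩ := he a
        exact ⟨k, hk ▸ Stmt8Aux.chain_e r e cr k⟩
      have hM : ∀ x : α, ∃ n, Relation.ReflTransGen r x (c n) ∧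
          ¬ Relation.ReflTransGen r (c n) x := by
        intro x
        by_contra hcon
        push_neg at hcon
        obtain ⟨a, ha⟩ := hz x
        apply ha
        obtain ⟨n₀, hn₀⟩ := hcof x
        obtain ⟨k, hk⟩ := hcof a
        have h1 : Relation.ReflTransGen r a (c (max k n₀)) :=
          hk.trans (hc k _ (le_max_left _ _))
        have h2 : Relation.ReflTransGen r x (c (max k n₀)) :=
          hn₀.trans (hc n₀ _ (le_max_right _ _))
        exact h1.trans (hcon (max k n₀) h2)
      let S : Stmt8Aux.Setup α := ⟨r, c, e, he, hc, hM⟩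
      refine ⟨S.s, ?_, ?_, S.acyclic, S.merge⟩
      · intro a b h
        rw [show b = S.f a from h]
        exact S.f_sub a
      · intro a b c' hb hc'
        exact hb.trans hc'.symm
  · refine ⟨fun _ _ => False, ?_, ?_, ?_, ?_⟩ <;> intro a <;> exact (hne ⟨a⟩).elim
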